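/- Let n ≥ 1, let c : Fin n → ℝ, let y : Fin n → ℝ satisfy y_i ≥ 0 for all i and Σ_i y_i ≤ 1, set λ = 1 − Σ_i y_i, and let ε satisfy 2λ ≤ ε < 2. Let s be a permutation of Fin n with c_{s_1} ≤ ⋯ ≤ c_{s_n}, and define ỹ by ỹ_{s_n} = min(y_{s_n} + ε/2, 1) and, for 1 ≤ t < n, ỹ_{s_t} = max(0, y_{s_t} − max(0, (ε/2 − λ) − Σ_{j<t} y_{s_j})). Then ỹ is an optimal solution of the modified gradient redirection problem: ỹ_i ≥ 0 for all i, Σ_i ỹ_i = 1, Σ_i |ỹ_i − y_i| + λ ≤ ε, and Σ_i c_i w_i ≤ Σ_i c_i ỹ_i for every w with w_i ≥ 0, Σ_i w_i = 1, and Σ_i |w_i − y_i| + λ ≤ ε. -/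

import Mathlib

lemma greedy_aux_abel (d u : ℕ → ℝ) (hd : Monotone d) :
    ∀ N, 1 ≤ N → (∀ k, k < N → ∑ j ∈ Finset.range k, u j ≤ 0) →
      d (N - 1) * (∑ j ∈ Finset.range N, u j) ≤ ∑ j ∈ Finset.range N, d j * u j := by
  intro N
  induction N with
  | zero => intro h; omega
  | succ N ih =>
    intro _ hU
    by_cases hN : N = 0
    · subst hN; simp
    · have h1 : 1 ≤ N := Nat.one_le_iff_ne_zero.mpr hN
      have ihh := ih h1 (fun k hk => hU k (by omega))
      have hUN : ∑ j ∈ Finset.range N, u j ≤ 0 := hU N (by omega)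
      have hdm : d (N - 1) ≤ d N := hd (by omega)
      have hmul : d N * (∑ j ∈ Finset.range N, u j) ≤
          d (N - 1) * (∑ j ∈ Finset.range N, u j) :=
        mul_le_mul_of_nonpos_right hdm hUN
      rw [Finset.sum_range_succ, Finset.sum_range_succ (fun j => d j * u j)]
      have hNN : N + 1 - 1 = N := rfl
      rw [hNN]
      nlinarith [ihh, hmul]

lemma greedy_aux_maxstep (X A : ℝ) (hA : 0 ≤ A) :
    max 0 X + max 0 (A - max 0 (0 - X)) = max 0 (X + A) := by
  rcases le_total X 0 with h | h
  · rw [max_eq_left h, max_eq_right (by linarith : (0:ℝ) ≤ 0 - X)]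
    rw [show A - (0 - X) = X + A by ring]
    linarith [le_refl (max 0 (X + A))]
  · rw [max_eq_right h, max_eq_left (by linarith : 0 - X ≤ (0:ℝ)), sub_zero,
      max_eq_right hA, max_eq_right (by linarith : (0:ℝ) ≤ X + A)]

lemma greedy_aux_twomax (x : ℝ) : 2 * max 0 x = |x| + x := by
  rcases le_total x 0 with h | h
  · rw [max_eq_left h, abs_of_nonpos h]; ring
  · rw [max_eq_right h, abs_of_nonneg h]; ring

/-- **Generalized (slack-λ) main theorem.** For the modified gradient
redirection problem with slack `λ = 1 - ∑ i, y i` and budget `2λ ≤ ε < 2`, the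
greedy vector `ty` (with `ty (s last) = min (y (s last) + ε/2) 1` and
`ty (s t) = max 0 (y (s t) - max 0 ((ε/2 - λ) - ∑_{j<t} y (s j)))` for
`t < last`) is feasible and optimal. -/
theorem greedy_gradient_redirection_optimal_slack
    (n : ℕ) (hn : 1 ≤ n) (c : Fin n → ℝ)
    (y : Fin n → ℝ) (hy0 : ∀ i, 0 ≤ y i) (hy1 : ∑ i, y i ≤ 1)
    (ε : ℝ) (hε0 : 2 * (1 - ∑ i, y i) ≤ ε) (hε2 : ε < 2)
    (s : Equiv.Perm (Fin n))
    (hs : Monotone (fun t => c (s t)))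
    (ty : Fin n → ℝ)
    (hty_last : ty (s ⟨n - 1, by omega⟩) = min (y (s ⟨n - 1, by omega⟩) + ε / 2) 1)
    (hty : ∀ t : Fin n, t ≠ ⟨n - 1, by omega⟩ →
      ty (s t) = max 0 (y (s t) -
        max 0 ((ε / 2 - (1 - ∑ i, y i)) - ∑ j ∈ Finset.Iio t, y (s j)))) :
    (∀ i, 0 ≤ ty i) ∧ (∑ i, ty i = 1) ∧
      ((∑ i, |ty i - y i|) + (1 - ∑ i, y i) ≤ ε) ∧
      (∀ w : Fin n → ℝ, (∀ i, 0 ≤ w i) → (∑ i, w i = 1) →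
        (∑ i, |w i - y i|) + (1 - ∑ i, y i) ≤ ε →
        ∑ i, c i * w i ≤ ∑ i, c i * ty i) := by
  have hn1 : n - 1 < n := by omega
  set lam : ℝ := 1 - ∑ i, y i with hlam
  set D : ℝ := ε / 2 - lam with hDdef
  have hlam0 : 0 ≤ lam := by rw [hlam]; linarith
  have hD0 : 0 ≤ D := by rw [hDdef]; linarith
  have hε00 : 0 ≤ ε := by linarith
  have heps2 : ε / 2 = D + lam := by rw [hDdef]; ring
  clear_value lam D
  set a : ℕ → ℝ := fun k => if h : k < n then y (s ⟨k, h⟩) else 0 with hadef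
  set T : ℕ → ℝ := fun k => if h : k < n then ty (s ⟨k, h⟩) else 0 with hTdef
  have hak : ∀ k (h : k < n), a k = y (s ⟨k, h⟩) := fun k h => by
    rw [hadef]; exact dif_pos h
  have hTk : ∀ k (h : k < n), T k = ty (s ⟨k, h⟩) := fun k h => by
    rw [hTdef]; exact dif_pos h
  have ha0 : ∀ k, 0 ≤ a k := by
    intro k
    by_cases h : k < n
    · rw [hak k h]; exact hy0 _
    · rw [hadef]; simp [h]
  have hconv : ∀ (f : Fin n → ℝ) (g : ℕ → ℝ), (∀ k (h : k < n), g k = f (s ⟨k, h⟩)) →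
      ∑ i, f i = ∑ k ∈ Finset.range n, g k := by
    intro f g hg
    rw [← Equiv.sum_comp s f, ← Fin.sum_univ_eq_sum_range g n]
    exact Finset.sum_congr rfl fun i _ => by rw [hg i.val i.isLt, Fin.eta]
  have hSy : ∑ i, y i = ∑ k ∈ Finset.range n, a k := hconv y a hak
  have hIio : ∀ t : Fin n, ∑ j ∈ Finset.Iio t, y (s j) = ∑ k ∈ Finset.range t.val, a k := by
    intro t
    refine Finset.sum_bij' (fun (j : Fin n) (_ : j ∈ Finset.Iio t) => (j : ℕ))
      (fun k (hk : k ∈ Finset.range t.val) =>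
        (⟨k, lt_trans (Finset.mem_range.mp hk) t.isLt⟩ : Fin n)) ?_ ?_ ?_ ?_ ?_
    · intro j hj
      have h' : j < t := Finset.mem_Iio.mp hj
      simp only [Finset.mem_range]
      exact h'
    · intro k hk
      have h' : k < t.val := Finset.mem_range.mp hk
      simp only [Finset.mem_Iio]
      exact h'
    · intro j hj; exact Fin.eta j j.isLt
    · intro k hk; rfl
    · intro j hj
      rw [hak j.val j.isLt, Fin.eta]
  have hTmid : ∀ k, k < n - 1 →
      T k = max 0 (a k - max 0 (D - ∑ j ∈ Finset.range k, a j)) := by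
    intro k hk
    have hkn : k < n := by omega
    have hne : (⟨k, hkn⟩ : Fin n) ≠ ⟨n - 1, by omega⟩ := by
      simp only [ne_eq, Fin.mk.injEq]; omega
    have h := hty ⟨k, hkn⟩ hne
    rw [hTk k hkn, h, hIio ⟨k, hkn⟩, hak k hkn]
  have hTlast : T (n - 1) = min (a (n - 1) + ε / 2) 1 := by
    rw [hTk (n - 1) hn1, hak (n - 1) hn1]
    exact hty_last
  have hSn : ∑ j ∈ Finset.range n, a j = 1 - lam := by
    rw [hlam, ← hSy]; ring
  have hSA : (∑ j ∈ Finset.range (n - 1), a j) + a (n - 1) = 1 - lam := by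
    rw [← Finset.sum_range_succ, show n - 1 + 1 = n from by omega]
    exact hSn
  have hprefix : ∀ k, k ≤ n - 1 →
      ∑ j ∈ Finset.range k, T j = max 0 ((∑ j ∈ Finset.range k, a j) - D) := by
    intro k
    induction k with
    | zero =>
      intro _
      simp only [Finset.sum_range_zero, zero_sub]
      rw [max_eq_left (by linarith : -D ≤ (0:ℝ))]
    | succ k ih =>
      intro hk1
      have hk : k < n - 1 := by omega
      rw [Finset.sum_range_succ, Finset.sum_range_succ, ih (by omega), hTmid k hk]
      have hms := greedy_aux_maxstep ((∑ j ∈ Finset.range k, a j) - D) (a k) (ha0 k)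
      rw [show D - ∑ j ∈ Finset.range k, a j
          = 0 - ((∑ j ∈ Finset.range k, a j) - D) from by ring, hms]
      congr 1
      ring
  have hTsum : ∑ j ∈ Finset.range n, T j = 1 := by
    conv_lhs => rw [show n = n - 1 + 1 from by omega]
    rw [Finset.sum_range_succ, hprefix (n - 1) le_rfl, hTlast]
    rcases le_total (∑ j ∈ Finset.range (n - 1), a j) D with h | h
    · rw [max_eq_left (by linarith), min_eq_right (by linarith)]
      norm_num
    · rw [max_eq_right (by linarith), min_eq_left (by linarith)]
      linarith
  have goal2 : ∑ i, ty i = 1 := by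
    rw [hconv ty T hTk]; exact hTsum
  have goal1 : ∀ i, 0 ≤ ty i := by
    intro i
    rcases eq_or_ne (s.symm i) ⟨n - 1, hn1⟩ with h | h
    · have hi : i = s ⟨n - 1, hn1⟩ := by rw [← h, Equiv.apply_symm_apply]
      rw [hi, hty_last]
      have := hy0 (s ⟨n - 1, hn1⟩)
      exact le_min (by linarith) (by norm_num)
    · have hi : i = s (s.symm i) := (Equiv.apply_symm_apply s i).symm
      rw [hi, hty (s.symm i) h]
      exact le_max_left 0 _
  have habsconv : ∀ (v : Fin n → ℝ) (V : ℕ → ℝ), (∀ k (h : k < n), V k = v (s ⟨k, h⟩)) →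
      ∑ i, |v i - y i| = ∑ k ∈ Finset.range n, |V k - a k| := by
    intro v V hV
    refine hconv (fun i => |v i - y i|) (fun k => |V k - a k|) ?_
    intro k h
    rw [hV k h, hak k h]
  have hbudget : (∑ i, |ty i - y i|) + lam ≤ ε := by
    rw [habsconv ty T hTk]
    have hsplitabs : ∑ k ∈ Finset.range n, |T k - a k|
        = (∑ k ∈ Finset.range (n - 1), |T k - a k|) + |T (n - 1) - a (n - 1)| := by
      conv_lhs => rw [show n = n - 1 + 1 from by omega]
      exact Finset.sum_range_succ _ _
    have h1 : ∀ j ∈ Finset.range (n - 1), |T j - a j| = a j - T j := by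
      intro j hj
      have hj' : j < n - 1 := Finset.mem_range.mp hj
      have hTle : T j ≤ a j := by
        rw [hTmid j hj']
        have h0 := le_max_left (0:ℝ) (D - ∑ i ∈ Finset.range j, a i)
        exact max_le (ha0 j) (by linarith)
      rw [abs_of_nonpos (by linarith)]; ring
    have hS0 : 0 ≤ ∑ j ∈ Finset.range (n - 1), a j :=
      Finset.sum_nonneg fun j _ => ha0 j
    have ha1 : a (n - 1) ≤ 1 - lam := by linarith
    have h3 : a (n - 1) ≤ T (n - 1) := by
      rw [hTlast]
      exact le_min (by linarith) (by linarith)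
    have h2 : ∑ j ∈ Finset.range (n - 1), (a j - T j)
        = (∑ j ∈ Finset.range (n - 1), a j)
          - max 0 ((∑ j ∈ Finset.range (n - 1), a j) - D) := by
      rw [Finset.sum_sub_distrib, hprefix (n - 1) le_rfl]
    rw [hsplitabs, Finset.sum_congr rfl h1, h2,
      abs_of_nonneg (by linarith : (0:ℝ) ≤ T (n - 1) - a (n - 1)), hTlast]
    rcases max_cases (0:ℝ) ((∑ j ∈ Finset.range (n - 1), a j) - D) with ⟨e1, e2⟩ | ⟨e1, e2⟩ <;>
      rcases min_cases (a (n - 1) + ε / 2) (1:ℝ) with ⟨e3, e4⟩ | ⟨e3, e4⟩ <;>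
      rw [e1, e3] <;> linarith
  refine ⟨goal1, goal2, hbudget, ?_⟩
  intro w hw0 hw1 hwb
  set W : ℕ → ℝ := fun k => if h : k < n then w (s ⟨k, h⟩) else 0 with hWdef
  have hWk : ∀ k (h : k < n), W k = w (s ⟨k, h⟩) := fun k h => by
    rw [hWdef]; exact dif_pos h
  have hW0 : ∀ k, 0 ≤ W k := by
    intro k
    by_cases h : k < n
    · rw [hWk k h]; exact hw0 _
    · rw [hWdef]; simp [h]
  have hWsum : ∑ k ∈ Finset.range n, W k = 1 := by
    rw [← hconv w W hWk]; exact hw1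
  have hWabs : ∑ k ∈ Finset.range n, |W k - a k| ≤ ε - lam := by
    rw [← habsconv w W hWk]; linarith
  have hkey : ∑ j ∈ Finset.range n, max 0 (a j - W j) ≤ D := by
    have hsum2 : 2 * ∑ j ∈ Finset.range n, max 0 (a j - W j)
        = (∑ j ∈ Finset.range n, |a j - W j|)
          + ((∑ j ∈ Finset.range n, a j) - ∑ j ∈ Finset.range n, W j) := by
      rw [Finset.mul_sum, ← Finset.sum_sub_distrib, ← Finset.sum_add_distrib]
      exact Finset.sum_congr rfl fun j _ => greedy_aux_twomax _
    have habs' : ∑ j ∈ Finset.range n, |a j - W j| ≤ ε - lam := by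
      calc ∑ j ∈ Finset.range n, |a j - W j|
          = ∑ j ∈ Finset.range n, |W j - a j| :=
            Finset.sum_congr rfl fun j _ => abs_sub_comm _ _
        _ ≤ ε - lam := hWabs
    rw [hSn, hWsum] at hsum2
    linarith
  have hprefW : ∀ k, k < n → ∑ j ∈ Finset.range k, (T j - W j) ≤ 0 := by
    intro k hk
    rw [Finset.sum_sub_distrib, hprefix k (by omega)]
    have hWpos : 0 ≤ ∑ j ∈ Finset.range k, W j :=
      Finset.sum_nonneg fun j _ => hW0 j
    rcases le_total ((∑ j ∈ Finset.range k, a j) - D) 0 with h | h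
    · rw [max_eq_left h]; linarith
    · rw [max_eq_right h]
      have hbd : (∑ j ∈ Finset.range k, a j) - (∑ j ∈ Finset.range k, W j) ≤ D := by
        calc (∑ j ∈ Finset.range k, a j) - (∑ j ∈ Finset.range k, W j)
            = ∑ j ∈ Finset.range k, (a j - W j) := (Finset.sum_sub_distrib _ _).symm
          _ ≤ ∑ j ∈ Finset.range k, max 0 (a j - W j) :=
              Finset.sum_le_sum fun j _ => le_max_right 0 _
          _ ≤ ∑ j ∈ Finset.range n, max 0 (a j - W j) :=
              Finset.sum_le_sum_of_subset_of_nonneg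
                (Finset.range_subset_range.mpr (by omega)) (fun j _ _ => le_max_left 0 _)
          _ ≤ D := hkey
      linarith
  set d : ℕ → ℝ :=
    fun k => c (s ⟨min k (n - 1), lt_of_le_of_lt (Nat.min_le_right _ _) hn1⟩) with hddef
  have hdk : ∀ k (h : k < n), d k = c (s ⟨k, h⟩) := by
    intro k h
    have hx : (⟨min k (n - 1), lt_of_le_of_lt (Nat.min_le_right _ _) hn1⟩ : Fin n)
        = ⟨k, h⟩ := Fin.ext (show min k (n - 1) = k by omega)
    rw [hddef]
    dsimp only
    rw [hx]
  have hdmono : Monotone d := by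
    intro k l hkl
    rw [hddef]
    dsimp only
    exact hs (by
      simp only [Fin.mk_le_mk]
      omega)
  have hobjW : ∑ i, c i * w i = ∑ k ∈ Finset.range n, d k * W k := by
    refine hconv (fun i => c i * w i) (fun k => d k * W k) ?_
    intro k h
    rw [hdk k h, hWk k h]
  have hobjT : ∑ i, c i * ty i = ∑ k ∈ Finset.range n, d k * T k := by
    refine hconv (fun i => c i * ty i) (fun k => d k * T k) ?_
    intro k h
    rw [hdk k h, hTk k h]
  have habel := greedy_aux_abel d (fun j => T j - W j) hdmono n hn hprefW
  have hzero : ∑ j ∈ Finset.range n, (T j - W j) = 0 := by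
    rw [Finset.sum_sub_distrib, hTsum, hWsum]; ring
  rw [hzero, mul_zero] at habel
  have hsub : ∑ j ∈ Finset.range n, d j * (T j - W j)
      = (∑ j ∈ Finset.range n, d j * T j) - ∑ j ∈ Finset.range n, d j * W j := by
    rw [← Finset.sum_sub_distrib]
    exact Finset.sum_congr rfl fun j _ => by ring
  rw [hsub] at habel
  rw [hobjW, hobjT]
  linarith
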